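/- Let (X, d_X) and (Y, d_Y) be Polish metric spaces with continuous 1-bounded pseudo-metrics ρ_X on X and ρ_Y on Y. Let μ be a Borel probability measure on X, let τ, ε > 0, let L ⊆ X be a Borel set with μ(L) ≥ 1 − τ, and let Φ : X → Y be a Borel measurable map. Let (M, ν) be a probability space and let φ_1, φ_2 : M → X be measurable maps with (φ_1)_*ν = (φ_2)_*ν = μ. If ∫_M ρ_Y(Φ(φ_1(p)), Φ(φ_2(p))) dν(p) < ε, then ∫_M ρ_X(φ_1(p), φ_2(p)) dν(p) ≤ 2τ + √ε + sup{ρ_X(x,y) : x, y ∈ L and ρ_Y(Φ(x),Φ(y)) ≤ √ε}. -/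

import Mathlib

open MeasureTheory

/-- Claim 2 in the proof of Theorem `thm:measure`: let `ρ_X, ρ_Y` be continuous
1-bounded pseudo-metrics on Polish metric spaces `X, Y`, `μ` a Borel probability
measure on `X`, `τ, ε > 0`, `L ⊆ X` Borel with `μ(L) ≥ 1-τ`, and `Φ : X → Y`
Borel measurable. If `φ₁, φ₂ : M → X` are measurable with `(φᵢ)_*ν = μ` on a
probability space `(M,ν)` and `∫ ρ_Y(Φφ₁, Φφ₂) dν < ε`, then
`∫ ρ_X(φ₁,φ₂) dν ≤ 2τ + √ε + sup{ρ_X(x,y) : x,y ∈ L, ρ_Y(Φx,Φy) ≤ √ε}`. -/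
theorem pullback_integral_estimate
    {X Y : Type*} [MetricSpace X] [PolishSpace X] [MeasurableSpace X] [BorelSpace X]
    [MetricSpace Y] [PolishSpace Y] [MeasurableSpace Y] [BorelSpace Y]
    (ρX : X → X → ℝ)
    (hXrefl : ∀ x, ρX x x = 0)
    (hXsymm : ∀ x y, ρX x y = ρX y x)
    (hXtri : ∀ x y z, ρX x z ≤ ρX x y + ρX y z)
    (hXnonneg : ∀ x y, 0 ≤ ρX x y)
    (hXbdd : ∀ x y, ρX x y ≤ 1)
    (hXcont : Continuous fun p : X × X => ρX p.1 p.2)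
    (ρY : Y → Y → ℝ)
    (hYrefl : ∀ y, ρY y y = 0)
    (hYsymm : ∀ x y, ρY x y = ρY y x)
    (hYtri : ∀ x y z, ρY x z ≤ ρY x y + ρY y z)
    (hYnonneg : ∀ x y, 0 ≤ ρY x y)
    (hYbdd : ∀ x y, ρY x y ≤ 1)
    (hYcont : Continuous fun p : Y × Y => ρY p.1 p.2)
    (μ : Measure X) [IsProbabilityMeasure μ]
    (τ ε : ℝ) (hτ : 0 < τ) (hε : 0 < ε)
    (L : Set X) (hLmeas : MeasurableSet L)
    (hL : ENNReal.ofReal (1 - τ) ≤ μ L)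
    (Φ : X → Y) (hΦ : Measurable Φ)
    {M : Type*} [MeasurableSpace M] (ν : Measure M) [IsProbabilityMeasure ν]
    (φ₁ φ₂ : M → X) (hφ₁ : Measurable φ₁) (hφ₂ : Measurable φ₂)
    (hpush₁ : ν.map φ₁ = μ) (hpush₂ : ν.map φ₂ = μ)
    (hint : ∫ p, ρY (Φ (φ₁ p)) (Φ (φ₂ p)) ∂ν < ε) :
    ∫ p, ρX (φ₁ p) (φ₂ p) ∂ν ≤
      2 * τ + Real.sqrt ε +
        sSup {r : ℝ | ∃ x ∈ L, ∃ y ∈ L,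
          ρY (Φ x) (Φ y) ≤ Real.sqrt ε ∧ r = ρX x y} := by
  set S := sSup {r : ℝ | ∃ x ∈ L, ∃ y ∈ L,
      ρY (Φ x) (Φ y) ≤ Real.sqrt ε ∧ r = ρX x y} with hSdef
  have hsqrt : (0:ℝ) < Real.sqrt ε := Real.sqrt_pos.mpr hε
  set f : M → ℝ := fun p => ρY (Φ (φ₁ p)) (Φ (φ₂ p)) with hfdef
  set g : M → ℝ := fun p => ρX (φ₁ p) (φ₂ p) with hgdef
  have hmf : Measurable f :=
    hYcont.measurable.comp ((hΦ.comp hφ₁).prodMk (hΦ.comp hφ₂))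
  have hmg : Measurable g :=
    hXcont.measurable.comp (hφ₁.prodMk hφ₂)
  have hintf : Integrable f ν := by
    refine (integrable_const (1:ℝ)).mono' hmf.aestronglyMeasurable ?_
    filter_upwards with p
    rw [Real.norm_eq_abs, abs_of_nonneg (hYnonneg _ _)]
    exact hYbdd _ _
  have hintg : Integrable g ν := by
    refine (integrable_const (1:ℝ)).mono' hmg.aestronglyMeasurable ?_
    filter_upwards with p
    rw [Real.norm_eq_abs, abs_of_nonneg (hXnonneg _ _)]
    exact hXbdd _ _
  have hbdd : BddAbove {r : ℝ | ∃ x ∈ L, ∃ y ∈ L,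
      ρY (Φ x) (Φ y) ≤ Real.sqrt ε ∧ r = ρX x y} := by
    refine ⟨1, fun r hr => ?_⟩
    obtain ⟨x, _, y, _, _, rfl⟩ := hr
    exact hXbdd x y
  have hS0 : 0 ≤ S := by
    apply Real.sSup_nonneg
    rintro r ⟨x, _, y, _, _, rfl⟩
    exact hXnonneg x y
  set B : Set M := (φ₁ ⁻¹' Lᶜ) ∪ (φ₂ ⁻¹' Lᶜ) ∪ {p | Real.sqrt ε < f p} with hBdef
  have hBmeas : MeasurableSet B :=
    ((hφ₁ hLmeas.compl).union (hφ₂ hLmeas.compl)).union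
      (measurableSet_lt measurable_const hmf)
  -- pointwise bound
  have hpt : ∀ p, g p ≤ B.indicator (fun _ => (1:ℝ)) p + S := by
    intro p
    by_cases hp : p ∈ B
    · rw [Set.indicator_of_mem hp]
      have := hXbdd (φ₁ p) (φ₂ p)
      linarith
    · rw [Set.indicator_of_notMem hp]
      simp only [hBdef, Set.mem_union, Set.mem_preimage, Set.mem_compl_iff,
        Set.mem_setOf_eq, not_or, not_lt, not_not] at hp
      obtain ⟨⟨h1, h2⟩, h3⟩ := hp
      have hmem : g p ∈ {r : ℝ | ∃ x ∈ L, ∃ y ∈ L,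
          ρY (Φ x) (Φ y) ≤ Real.sqrt ε ∧ r = ρX x y} := by
        refine ⟨φ₁ p, h1, φ₂ p, h2, h3, rfl⟩
      have := le_csSup hbdd hmem
      linarith
  -- measure of B
  have hLc : ∀ (φ : M → X), Measurable φ → ν.map φ = μ →
      ν (φ ⁻¹' Lᶜ) ≤ ENNReal.ofReal τ := by
    intro φ hφ hpush
    have h1 : ν (φ ⁻¹' Lᶜ) = μ Lᶜ := by
      rw [← hpush, Measure.map_apply hφ hLmeas.compl]
    rw [h1, measure_compl hLmeas (measure_ne_top μ L)]
    rcases le_or_gt τ 1 with hτ1 | hτ1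
    · have : μ Set.univ - μ L ≤ ENNReal.ofReal 1 - ENNReal.ofReal (1 - τ) := by
        rw [measure_univ, ENNReal.ofReal_one]
        exact tsub_le_tsub_left hL 1
      refine this.trans ?_
      rw [← ENNReal.ofReal_sub _ (by linarith)]
      norm_num
    · calc μ Set.univ - μ L ≤ μ Set.univ := tsub_le_self
        _ = 1 := measure_univ
        _ ≤ ENNReal.ofReal τ := by
            rw [← ENNReal.ofReal_one]
            exact ENNReal.ofReal_le_ofReal hτ1.le
  have hmarkov : (ν {p | Real.sqrt ε ≤ f p}).toReal ≤ Real.sqrt ε := by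
    have h := mul_meas_ge_le_integral_of_nonneg
      (ae_of_all ν fun p => hYnonneg (Φ (φ₁ p)) (Φ (φ₂ p))) hintf (Real.sqrt ε)
    have h2 : Real.sqrt ε * (ν {p | Real.sqrt ε ≤ f p}).toReal < ε := lt_of_le_of_lt h hint
    have h3 : Real.sqrt ε * Real.sqrt ε = ε := Real.mul_self_sqrt hε.le
    nlinarith [h2, hsqrt]
  have hB3 : ν {p | Real.sqrt ε < f p} ≤ ENNReal.ofReal (Real.sqrt ε) := by
    refine le_trans (measure_mono (s := {p | Real.sqrt ε < f p}) (t := {p | Real.sqrt ε ≤ f p}) fun p (hp : Real.sqrt ε < f p) => le_of_lt hp) ?_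
    rw [ENNReal.le_ofReal_iff_toReal_le (measure_ne_top ν _) hsqrt.le]
    exact hmarkov
  have hBle : ν B ≤ ENNReal.ofReal (τ + τ + Real.sqrt ε) := by
    calc ν B ≤ ν ((φ₁ ⁻¹' Lᶜ) ∪ (φ₂ ⁻¹' Lᶜ)) + ν {p | Real.sqrt ε < f p} :=
          measure_union_le _ _
      _ ≤ (ν (φ₁ ⁻¹' Lᶜ) + ν (φ₂ ⁻¹' Lᶜ)) + ν {p | Real.sqrt ε < f p} :=
          add_le_add (measure_union_le _ _) le_rfl
      _ ≤ (ENNReal.ofReal τ + ENNReal.ofReal τ) + ENNReal.ofReal (Real.sqrt ε) :=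
          add_le_add (add_le_add (hLc φ₁ hφ₁ hpush₁) (hLc φ₂ hφ₂ hpush₂)) hB3
      _ = ENNReal.ofReal (τ + τ + Real.sqrt ε) := by
          rw [ENNReal.ofReal_add (by linarith) hsqrt.le,
            ENNReal.ofReal_add hτ.le hτ.le]
  have hBreal : (ν B).toReal ≤ τ + τ + Real.sqrt ε :=
    ENNReal.toReal_le_of_le_ofReal (by positivity) hBle
  -- integrate the pointwise bound
  have hI : ∫ p, g p ∂ν ≤ (ν B).toReal + S := by
    have hind : Integrable (fun p => B.indicator (fun _ => (1:ℝ)) p + S) ν :=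
      ((integrable_const (1:ℝ)).indicator hBmeas).add (integrable_const S)
    calc ∫ p, g p ∂ν ≤ ∫ p, (B.indicator (fun _ => (1:ℝ)) p + S) ∂ν :=
          integral_mono hintg hind hpt
      _ = (∫ p, B.indicator (fun _ => (1:ℝ)) p ∂ν) + ∫ _, S ∂ν :=
          integral_add ((integrable_const (1:ℝ)).indicator hBmeas) (integrable_const S)
      _ = (ν B).toReal + S := by
          rw [integral_indicator_const _ hBmeas, integral_const]
          simp [measure_univ]
          rfl
  calc ∫ p, g p ∂ν ≤ (ν B).toReal + S := hI
    _ ≤ 2 * τ + Real.sqrt ε + S := by linarith
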